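/- Suppose W_l W_lᵀ = W_{l+1}ᵀ W_{l+1} for l = 1,...,L-1, where W_l ∈ ℝ^{d_l × d_{l-1}}. Then ‖W_L W_{L-1} ⋯ W₁‖ = ‖W₁‖^L, where ‖·‖ denotes the spectral norm. More generally, the i-th singular value of the product W_L⋯W₁ equals the L-th power of the i-th singular value of W₁, for all i ≤ min{d₀,...,d_L}. -/

import Mathlib

open Matrix

open Polynomial

section MultisetLemmas

lemma my_sort_add_zero (s : Multiset ℝ) (hs : ∀ x ∈ s, 0 ≤ x) :
    (s + {0}).sort (· ≥ ·) = s.sort (· ≥ ·) ++ [0] := by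
  have hperm : List.Perm ((s + {0}).sort (· ≥ ·)) (s.sort (· ≥ ·) ++ [0]) := by
    refine Multiset.coe_eq_coe.mp ?_
    rw [Multiset.sort_eq, ← Multiset.coe_add, Multiset.sort_eq, Multiset.coe_singleton]
  refine List.Perm.eq_of_pairwise' (Multiset.pairwise_sort _ _) ?_ hperm
  rw [List.pairwise_append]
  refine ⟨Multiset.pairwise_sort _ _, List.pairwise_singleton _ 0, ?_⟩
  intro a ha b hb
  rw [List.mem_singleton] at hb
  subst hb
  exact hs a ((Multiset.mem_sort _).mp ha)

lemma my_getD_append_zero (l : List ℝ) (i : ℕ) :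
    (l ++ [0]).getD i 0 = l.getD i 0 := by
  by_cases h : i < l.length
  · rw [List.getD_append _ _ _ _ h]
  · push_neg at h
    rw [List.getD_eq_default _ _ h, List.getD_append_right _ _ _ _ h]
    rcases Nat.lt_or_ge (i - l.length) 1 with h1 | h1
    · interval_cases h2 : (i - l.length)
      rfl
    · rw [List.getD_eq_default]
      simpa using h1

lemma my_getD_pad (s : Multiset ℝ) (hs : ∀ x ∈ s, 0 ≤ x) (k i : ℕ) :
    ((s + Multiset.replicate k 0).sort (· ≥ ·)).getD i 0 = (s.sort (· ≥ ·)).getD i 0 := by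
  induction k with
  | zero => simp
  | succ k ih =>
      have : s + Multiset.replicate (k+1) 0 = (s + Multiset.replicate k 0) + {0} := by
        rw [Multiset.replicate_succ]
        conv_rhs => rw [add_assoc, add_comm (Multiset.replicate k 0), Multiset.singleton_add]
      rw [this, my_sort_add_zero _ (by
        intro x hx
        rcases Multiset.mem_add.mp hx with h | h
        · exact hs x h
        · rw [Multiset.eq_of_mem_replicate h]), my_getD_append_zero, ih]

lemma my_sort_map_pow (s : Multiset ℝ) (hs : ∀ x ∈ s, 0 ≤ x) (L : ℕ) :
    (s.map (· ^ L)).sort (· ≥ ·) = (s.sort (· ≥ ·)).map (· ^ L) := by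
  have hperm : List.Perm ((s.map (· ^ L)).sort (· ≥ ·)) ((s.sort (· ≥ ·)).map (· ^ L)) := by
    refine Multiset.coe_eq_coe.mp ?_
    rw [Multiset.sort_eq, ← Multiset.map_coe, Multiset.sort_eq]
  refine List.Perm.eq_of_pairwise' (Multiset.pairwise_sort _ _) ?_ hperm
  rw [List.pairwise_map]
  have hp : (s.sort (· ≥ ·)).Pairwise (· ≥ ·) := Multiset.pairwise_sort _ _
  refine List.Pairwise.imp_of_mem ?_ hp
  intro a b ha hb hab
  have hb0 : 0 ≤ b := hs b ((Multiset.mem_sort _).mp hb)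
  exact pow_le_pow_left₀ hb0 hab L

lemma my_getD_map_pow (s : Multiset ℝ) (hs : ∀ x ∈ s, 0 ≤ x) (L : ℕ) (hL : L ≠ 0) (i : ℕ) :
    ((s.map (· ^ L)).sort (· ≥ ·)).getD i 0 = ((s.sort (· ≥ ·)).getD i 0) ^ L := by
  rw [my_sort_map_pow s hs L]
  by_cases h : i < (s.sort (· ≥ ·)).length
  · rw [List.getD_eq_getElem _ _ (by simpa using h), List.getD_eq_getElem _ _ h,
      List.getElem_map]
  · push_neg at h
    rw [List.getD_eq_default _ _ (by simpa using h), List.getD_eq_default _ _ h, zero_pow hL]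

lemma my_sqrt_pow {x : ℝ} (hx : 0 ≤ x) (n : ℕ) :
    Real.sqrt (x ^ n) = Real.sqrt x ^ n := by
  have h := Real.sqrt_nonneg x
  conv_lhs => rw [show x = Real.sqrt x ^ 2 from (Real.sq_sqrt hx).symm,
    ← pow_mul, mul_comm, pow_mul, Real.sqrt_sq (pow_nonneg h n)]

end MultisetLemmas

section CharpolyLemmas

variable {R : Type*} [CommRing R] {m n : Type*} [Fintype m] [Fintype n] [DecidableEq m]
  [DecidableEq n]

lemma my_charmatrix_conj (U V M : Matrix m m R) (hUV : U * V = 1) :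
    charmatrix (U * M * V) = (U.map C) * charmatrix M * (V.map C) := by
  have hscalar : (Matrix.scalar m (X : R[X])) = (X : R[X]) • (1 : Matrix m m R[X]) := by
    ext i j
    by_cases h : i = j <;> simp [Matrix.scalar, h, Matrix.one_apply, diagonal]
  have h1 : (U.map (C : R →+* R[X])) * (V.map C) = 1 := by
    rw [← Matrix.map_mul, hUV]; simp [Matrix.map_one]
  rw [charmatrix, charmatrix]
  simp only [RingHom.mapMatrix_apply]
  rw [mul_sub, sub_mul, hscalar]
  rw [mul_smul_comm, smul_mul_assoc, mul_one, h1]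
  rw [← Matrix.map_mul, ← Matrix.map_mul, Matrix.mul_assoc]

lemma my_charpoly_conj (U V M : Matrix m m R) (hUV : U * V = 1) :
    (U * M * V).charpoly = M.charpoly := by
  rw [Matrix.charpoly, my_charmatrix_conj U V M hUV, Matrix.charpoly]
  rw [det_mul, det_mul]
  have h1 : (U.map (C : R →+* R[X])) * (V.map C) = 1 := by
    rw [← Matrix.map_mul, hUV]; simp [Matrix.map_one]
  have h2 := congrArg Matrix.det h1
  rw [det_mul, det_one] at h2
  calc (U.map (C : R →+* R[X])).det * M.charmatrix.det * (V.map C).det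
      = ((U.map (C : R →+* R[X])).det * (V.map C).det) * M.charmatrix.det := by ring
    _ = M.charmatrix.det := by rw [h2, one_mul]

lemma my_charpoly_zero : (0 : Matrix m m R).charpoly = X ^ (Fintype.card m) := by
  have : charmatrix (0 : Matrix m m R) = diagonal (fun _ => (X : R[X])) := by
    ext i j; by_cases h : i = j <;> simp [h]
  rw [Matrix.charpoly, this, det_diagonal]
  simp

lemma my_charpoly_diagonal (v : m → R) :
    (diagonal v).charpoly = ∏ i, (X - C (v i)) := by
  have : charmatrix (diagonal v) = diagonal (fun i => (X : R[X]) - C (v i)) := by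
    ext i j; by_cases h : i = j <;> simp [h, diagonal]
  rw [Matrix.charpoly, this, det_diagonal]

/-- `charpoly (A*B) * X^n = X^m * charpoly (B*A)` for rectangular `A : m×n`, `B : n×m`. -/
lemma my_charpoly_mul_comm (A : Matrix m n R) (B : Matrix n m R) :
    (A * B).charpoly * X ^ (Fintype.card n) = X ^ (Fintype.card m) * (B * A).charpoly := by
  classical
  set P : Matrix (m ⊕ n) (m ⊕ n) R := fromBlocks 1 A 0 1
  set Q : Matrix (m ⊕ n) (m ⊕ n) R := fromBlocks 1 (-A) 0 1
  have hPQ : P * Q = 1 := by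
    simp [P, Q, Matrix.fromBlocks_multiply, ← Matrix.fromBlocks_one]
  set M : Matrix (m ⊕ n) (m ⊕ n) R := fromBlocks 0 0 B (B * A)
  have hconj : P * M * Q = fromBlocks (A * B) 0 B 0 := by
    simp [P, Q, M, Matrix.fromBlocks_multiply, Matrix.mul_assoc]
  have h1 : (fromBlocks (A * B) 0 B (0 : Matrix n n R)).charpoly = M.charpoly := by
    rw [← hconj, my_charpoly_conj _ _ _ hPQ]
  rw [Matrix.charpoly_fromBlocks_zero₁₂, Matrix.charpoly_fromBlocks_zero₁₂] at h1
  rw [my_charpoly_zero, my_charpoly_zero] at h1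
  exact h1

lemma my_conj_pow (U D V : Matrix m m ℝ) (hVU : V * U = 1) (k : ℕ) :
    (U * D * V) ^ k * U = U * D ^ k := by
  induction k with
  | zero => simp
  | succ k ih =>
      have h2 : (U * D * V) * U = U * D := by
        rw [mul_assoc (U * D) V U, hVU, mul_one]
      rw [pow_succ, mul_assoc, h2, ← mul_assoc, ih, mul_assoc, ← pow_succ]

omit [DecidableEq m] in
lemma my_prod_roots (v : m → ℝ) :
    (∏ i, (X - C (v i))).roots = Multiset.map v Finset.univ.val := by
  rw [← Polynomial.roots_multiset_prod_X_sub_C (Multiset.map v Finset.univ.val)]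
  congr 1
  rw [Multiset.map_map]
  rfl

lemma my_herm_charpoly_pow {A : Matrix m m ℝ} (hA : A.IsHermitian) (k : ℕ) :
    (A ^ k).charpoly = ∏ i, (X - C (hA.eigenvalues i ^ k)) := by
  classical
  set U : Matrix m m ℝ := (hA.eigenvectorUnitary : Matrix m m ℝ) with hU
  have hUV : U * star U = 1 := (Matrix.mem_unitaryGroup_iff).mp hA.eigenvectorUnitary.2
  have hVU : star U * U = 1 := (Matrix.mem_unitaryGroup_iff').mp hA.eigenvectorUnitary.2
  have hspec : A = U * diagonal hA.eigenvalues * star U := by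
    have := hA.spectral_theorem
    simpa using this
  have hpow : A ^ k = U * (diagonal hA.eigenvalues) ^ k * star U := by
    conv_lhs => rw [hspec]
    calc (U * diagonal hA.eigenvalues * star U) ^ k
        = (U * diagonal hA.eigenvalues * star U) ^ k * (U * star U) := by rw [hUV, Matrix.mul_one]
      _ = U * (diagonal hA.eigenvalues) ^ k * star U := by
          rw [← Matrix.mul_assoc, my_conj_pow U (diagonal hA.eigenvalues) (star U) hVU k]
  rw [hpow, Matrix.diagonal_pow, my_charpoly_conj _ _ _ hUV, my_charpoly_diagonal]
  simp

/-- roots of the charpoly of `B * Bᵀ` (real): eigenvalues, all nonneg. -/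
lemma my_BBt_herm (B : Matrix m n ℝ) : (B * Bᵀ).IsHermitian := by
  rw [← Matrix.conjTranspose_eq_transpose_of_trivial]
  exact Matrix.isHermitian_mul_conjTranspose_self B

lemma my_BBt_roots_nonneg (B : Matrix m n ℝ) :
    ∀ x ∈ (B * Bᵀ).charpoly.roots, 0 ≤ x := by
  have hherm := my_BBt_herm B
  have h1 : (B * Bᵀ).charpoly = ∏ i, (X - C (hherm.eigenvalues i)) := by
    have := my_herm_charpoly_pow hherm 1
    simpa using this
  rw [h1, my_prod_roots]
  intro x hx
  rcases Multiset.mem_map.mp hx with ⟨i, _, rfl⟩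
  have hps : (B * Bᵀ).PosSemidef := by
    have := Matrix.posSemidef_self_mul_conjTranspose B
    rwa [Matrix.conjTranspose_eq_transpose_of_trivial] at this
  exact hps.eigenvalues_nonneg i

lemma my_BBt_pow_roots (B : Matrix m n ℝ) (k : ℕ) :
    ((B * Bᵀ) ^ k).charpoly.roots = ((B * Bᵀ).charpoly.roots).map (· ^ k) := by
  have hherm := my_BBt_herm B
  have h1 : (B * Bᵀ).charpoly = ∏ i, (X - C (hherm.eigenvalues i)) := by
    have := my_herm_charpoly_pow hherm 1
    simpa using this
  rw [my_herm_charpoly_pow hherm k, my_prod_roots, h1, my_prod_roots, Multiset.map_map]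
  rfl

end CharpolyLemmas

/-- `chainProd d W j = W_{j-1} ⋯ W_0` (product of the first `j` layer matrices). -/
noncomputable def chainProd (d : ℕ → ℕ)
    (W : ∀ l : ℕ, Matrix (Fin (d (l + 1))) (Fin (d l)) ℝ) :
    ∀ j : ℕ, Matrix (Fin (d j)) (Fin (d 0)) ℝ
  | 0 => (1 : Matrix (Fin (d 0)) (Fin (d 0)) ℝ)
  | j + 1 => W j * chainProd d W j


section Helpers
variable {m n : Type*} [Fintype m] [Fintype n] [DecidableEq m] [DecidableEq n]

lemma my_shift (A : Matrix m n ℝ) (t : ℕ) :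
    A * (Aᵀ * A) ^ t = (A * Aᵀ) ^ t * A := by
  induction t with
  | zero => simp
  | succ t ih =>
      rw [pow_succ, ← Matrix.mul_assoc, ih, pow_succ]
      simp only [Matrix.mul_assoc]
end Helpers

lemma my_chain (L : ℕ) (d : ℕ → ℕ)
    (W : ∀ l : ℕ, Matrix (Fin (d (l + 1))) (Fin (d l)) ℝ)
    (hbal : ∀ l : ℕ, l + 1 < L → W l * (W l)ᵀ = (W (l + 1))ᵀ * W (l + 1)) :
    ∀ k, k + 1 ≤ L →
      chainProd d W (k+1) * (chainProd d W (k+1))ᵀ = (W k * (W k)ᵀ) ^ (k+1) := by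
  intro k
  induction k with
  | zero =>
      intro _
      show (W 0 * chainProd d W 0) * (W 0 * chainProd d W 0)ᵀ = _
      show (W 0 * 1) * (W 0 * 1)ᵀ = _
      rw [Matrix.mul_one, pow_one]
  | succ k ih =>
      intro hk
      have hP := ih (by omega)
      show (W (k+1) * chainProd d W (k+1)) * (W (k+1) * chainProd d W (k+1))ᵀ = _
      rw [Matrix.transpose_mul, show W (k+1) * chainProd d W (k+1) *
            ((chainProd d W (k+1))ᵀ * (W (k+1))ᵀ)
          = W (k+1) * (chainProd d W (k+1) * (chainProd d W (k+1))ᵀ) * (W (k+1))ᵀ by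
            rw [Matrix.mul_assoc, Matrix.mul_assoc, Matrix.mul_assoc],
        hP, hbal k (by omega), my_shift (W (k+1)) (k+1), Matrix.mul_assoc, ← pow_succ]


/-- The `i`-th largest singular value (0-indexed) of a real matrix `A`: the `i`-th entry of
the decreasingly sorted list of square roots of the roots (with multiplicity) of the
characteristic polynomial of `A Aᵀ`, with default value `0` beyond the list length. -/
noncomputable def ithSV {m n : ℕ} (A : Matrix (Fin m) (Fin n) ℝ) (i : ℕ) : ℝ :=
  (((A * Aᵀ).charpoly.roots.map Real.sqrt).sort (· ≥ ·)).getD i 0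


lemma my_sqrt_mem_nonneg (s : Multiset ℝ) : ∀ x ∈ s.map Real.sqrt, 0 ≤ x := by
  intro x hx
  rcases Multiset.mem_map.mp hx with ⟨y, _, rfl⟩
  exact Real.sqrt_nonneg y

/-- Under the balancedness condition `W_l W_lᵀ = W_{l+1}ᵀ W_{l+1}`, the spectral norm
(largest singular value) of the product `W_{L-1} ⋯ W_0` equals `‖W_0‖^L`, and more
generally the `i`-th singular value of the product equals the `L`-th power of the `i`-th
singular value of `W_0`, for all `i < min {d 0, …, d L}`. -/
theorem stmt_15 (L : ℕ) (hL : 2 ≤ L) (d : ℕ → ℕ)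
    (W : ∀ l : ℕ, Matrix (Fin (d (l + 1))) (Fin (d l)) ℝ)
    (hbal : ∀ l : ℕ, l + 1 < L → W l * (W l)ᵀ = (W (l + 1))ᵀ * W (l + 1)) :
    ithSV (chainProd d W L) 0 = ithSV (W 0) 0 ^ L ∧
      ∀ i : ℕ, (∀ l : ℕ, l ≤ L → i < d l) →
        ithSV (chainProd d W L) i = ithSV (W 0) i ^ L := by
  obtain ⟨k, rfl⟩ : ∃ k, L = k + 1 := ⟨L - 1, by omega⟩
  suffices h : ∀ i, ithSV (chainProd d W (k+1)) i = ithSV (W 0) i ^ (k+1) by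
    exact ⟨h 0, fun i _ => h i⟩
  intro i
  -- the downward chain: the sorted sqrt-roots statistic is the same for all levels
  have hdown : ∀ l, l ≤ k →
      (((W l * (W l)ᵀ).charpoly.roots.map Real.sqrt).sort (· ≥ ·)).getD i 0
        = (((W 0 * (W 0)ᵀ).charpoly.roots.map Real.sqrt).sort (· ≥ ·)).getD i 0 := by
    intro l
    induction l with
    | zero => intro _; rfl
    | succ l ih =>
        intro hl
        have hb := hbal l (by omega)
        have hcp := my_charpoly_mul_comm (W (l+1)) (W (l+1))ᵀ
        have hr := congrArg Polynomial.roots hcp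
        rw [Polynomial.roots_mul (mul_ne_zero (Matrix.charpoly_monic _).ne_zero
              (pow_ne_zero _ Polynomial.X_ne_zero)),
            Polynomial.roots_mul (mul_ne_zero (pow_ne_zero _ Polynomial.X_ne_zero)
              (Matrix.charpoly_monic _).ne_zero),
            Polynomial.roots_pow, Polynomial.roots_pow, Polynomial.roots_X,
            Multiset.nsmul_singleton, Multiset.nsmul_singleton, Fintype.card_fin,
            Fintype.card_fin, ← hb] at hr
        have hrs := congrArg (Multiset.map Real.sqrt) hr
        rw [Multiset.map_add, Multiset.map_add, Multiset.map_replicate, Multiset.map_replicate,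
          Real.sqrt_zero] at hrs
        calc (((W (l+1) * (W (l+1))ᵀ).charpoly.roots.map Real.sqrt).sort (· ≥ ·)).getD i 0
            = ((((W (l+1) * (W (l+1))ᵀ).charpoly.roots.map Real.sqrt)
                + Multiset.replicate (d (l+1)) 0).sort (· ≥ ·)).getD i 0 :=
              (my_getD_pad _ (my_sqrt_mem_nonneg _) _ i).symm
          _ = ((((W l * (W l)ᵀ).charpoly.roots.map Real.sqrt)
                + Multiset.replicate (d (l+1+1)) 0).sort (· ≥ ·)).getD i 0 := by
              rw [hrs, add_comm]
          _ = (((W l * (W l)ᵀ).charpoly.roots.map Real.sqrt).sort (· ≥ ·)).getD i 0 :=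
              my_getD_pad _ (my_sqrt_mem_nonneg _) _ i
          _ = _ := ih (by omega)
  have hP := my_chain (k+1) d W hbal k le_rfl
  have hnn := my_BBt_roots_nonneg (W k)
  calc ithSV (chainProd d W (k+1)) i
      = ((((W k * (W k)ᵀ) ^ (k+1)).charpoly.roots.map Real.sqrt).sort (· ≥ ·)).getD i 0 := by
        rw [ithSV, hP]
    _ = (((((W k * (W k)ᵀ).charpoly.roots.map Real.sqrt).map (· ^ (k+1))).sort (· ≥ ·)).getD
          i 0) := by
        rw [my_BBt_pow_roots (W k) (k+1), Multiset.map_map, Multiset.map_map]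
        congr 1
        congr 1
        refine Multiset.map_congr rfl ?_
        intro x hx
        exact my_sqrt_pow (hnn x hx) (k+1)
    _ = ((((W k * (W k)ᵀ).charpoly.roots.map Real.sqrt).sort (· ≥ ·)).getD i 0) ^ (k+1) :=
        my_getD_map_pow _ (my_sqrt_mem_nonneg _) (k+1) (by omega) i
    _ = ithSV (W 0) i ^ (k+1) := by rw [hdown k le_rfl]; rfl
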